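/- Let H : ℝ → ℝ be continuously differentiable and π-periodic. Then there exists a universal constant K > 0 (independent of H) such that ∫₀^π (H(x) - (1/π)∫₀^π H(y) dy)² dx ≤ K ∫₀^π sin²(x) * (H'(x))² dx. -/

import Mathlib

open Real MeasureTheory intervalIntegral

lemma hardy_step (u u' : ℝ → ℝ) (a b e : ℝ) (hab : a ≤ b)
    (hd : ∀ x, HasDerivAt u (u' x) x) (hc' : Continuous u')
    (hbd : (b - e) * u b ^ 2 = (a - e) * u a ^ 2) :
    ∫ x in a..b, u x ^ 2 ≤ 4 * ∫ x in a..b, (x - e) ^ 2 * u' x ^ 2 := by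
  have hu : Continuous u := by
    rw [continuous_iff_continuousAt]; exact fun x => (hd x).continuousAt
  have hi1 : IntervalIntegrable (fun x => u x ^ 2) volume a b :=
    (hu.pow 2).intervalIntegrable _ _
  have hi2 : IntervalIntegrable (fun x => (x - e) * u x * u' x) volume a b :=
    (((continuous_id.sub continuous_const).mul hu).mul hc').intervalIntegrable _ _
  have hi3 : IntervalIntegrable (fun x => (x - e) ^ 2 * u' x ^ 2) volume a b :=
    (((continuous_id.sub continuous_const).pow 2).mul (hc'.pow 2)).intervalIntegrable _ _
  set I1 := ∫ x in a..b, u x ^ 2 with hI1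
  set I2 := ∫ x in a..b, (x - e) * u x * u' x with hI2
  set I3 := ∫ x in a..b, (x - e) ^ 2 * u' x ^ 2 with hI3
  have ibp : ∫ x in a..b, (u x ^ 2 + 2 * ((x - e) * u x * u' x))
      = (b - e) * u b ^ 2 - (a - e) * u a ^ 2 := by
    apply intervalIntegral.integral_eq_sub_of_hasDerivAt
    · intro x hx
      have h := ((hasDerivAt_id x).sub_const e).mul ((hd x).pow 2)
      refine h.congr_deriv ?_
      simp only [id_eq, Pi.pow_apply]
      push_cast
      ring
    · exact (hi1.add (hi2.const_mul 2))
  have h12 : I1 + 2 * I2 = 0 := by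
    rw [hI1, hI2, ← intervalIntegral.integral_const_mul,
      ← intervalIntegral.integral_add hi1 (hi2.const_mul 2)]
    rw [ibp, hbd]; ring
  have h0 : (0:ℝ) ≤ ∫ x in a..b, (u x + 2 * (x - e) * u' x) ^ 2 :=
    intervalIntegral.integral_nonneg hab (fun x _ => sq_nonneg _)
  have hexp : ∫ x in a..b, (u x + 2 * (x - e) * u' x) ^ 2
      = I1 + (4 * I2 + 4 * I3) := by
    rw [hI1, hI2, hI3, ← intervalIntegral.integral_const_mul,
      ← intervalIntegral.integral_const_mul,
      ← intervalIntegral.integral_add (hi2.const_mul 4) (hi3.const_mul 4),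
      ← intervalIntegral.integral_add hi1 ((hi2.const_mul 4).add (hi3.const_mul 4))]
    apply intervalIntegral.integral_congr
    intro x hx
    ring
  rw [hexp] at h0
  linarith

open Real in
theorem stmt3 :
    ∃ K > 0, ∀ H : ℝ → ℝ, ContDiff ℝ 1 H → Function.Periodic H π →
      ∫ x in (0:ℝ)..π, (H x - (1/π) * ∫ y in (0:ℝ)..π, H y)^2
        ≤ K * ∫ x in (0:ℝ)..π, Real.sin x ^ 2 * (deriv H x)^2 := by
  refine ⟨π ^ 2, by positivity, fun H hH _ => ?_⟩
  have hpi := Real.pi_pos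
  have hHd : Differentiable ℝ H := hH.differentiable one_ne_zero
  have hHc : Continuous H := hHd.continuous
  have hc' : Continuous (deriv H) := hH.continuous_deriv le_rfl
  set c := H (π / 2) with hc
  set m := (1/π) * ∫ y in (0:ℝ)..π, H y with hm
  set u : ℝ → ℝ := fun x => H x - c with hu
  have hd : ∀ x, HasDerivAt u (deriv H x) x := fun x =>
    ((hHd x).hasDerivAt).sub_const c
  have hub : u (π / 2) = 0 := by simp [hu, hc]
  have huc : Continuous u := hHc.sub continuous_const
  -- integrability facts
  have hiH : IntervalIntegrable H volume 0 π := hHc.intervalIntegrable _ _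
  have hium : IntervalIntegrable (fun x => (H x - m) ^ 2) volume 0 π :=
    ((hHc.sub continuous_const).pow 2).intervalIntegrable _ _
  have hiuc : ∀ a b : ℝ, IntervalIntegrable (fun x => u x ^ 2) volume a b := fun a b =>
    (huc.pow 2).intervalIntegrable _ _
  have hisin : ∀ a b : ℝ, IntervalIntegrable (fun x => Real.sin x ^ 2 * deriv H x ^ 2) volume a b :=
    fun a b => ((Real.continuous_sin.pow 2).mul (hc'.pow 2)).intervalIntegrable _ _
  -- Step A: mean minimizes L² distance
  have hintH : ∫ y in (0:ℝ)..π, H y = π * m := by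
    rw [hm]; field_simp
  have keyA : ∫ x in (0:ℝ)..π, ((H x - c) ^ 2 - (H x - m) ^ 2)
      = π * (m - c) ^ 2 := by
    have : ∫ x in (0:ℝ)..π, ((H x - c) ^ 2 - (H x - m) ^ 2)
        = ∫ x in (0:ℝ)..π, ((m - c) * (2 * H x - (c + m))) := by
      apply intervalIntegral.integral_congr; intro x hx; ring
    rw [this, intervalIntegral.integral_const_mul,
      intervalIntegral.integral_sub ((hiH.const_mul 2)) (intervalIntegrable_const),
      intervalIntegral.integral_const_mul, hintH, intervalIntegral.integral_const]
    simp only [smul_eq_mul, sub_zero]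
    ring
  have stepA : ∫ x in (0:ℝ)..π, (H x - m) ^ 2 ≤ ∫ x in (0:ℝ)..π, u x ^ 2 := by
    have hiuc2 : IntervalIntegrable (fun x => (H x - c) ^ 2) volume 0 π :=
      ((hHc.sub continuous_const).pow 2).intervalIntegrable _ _
    have h := intervalIntegral.integral_sub hiuc2 hium
    have h2 : (0:ℝ) ≤ π * (m - c) ^ 2 := by positivity
    have hco : (∫ x in (0:ℝ)..π, u x ^ 2) = ∫ x in (0:ℝ)..π, (H x - c) ^ 2 := by rw [hu]
    have h3 : (∫ x in (0:ℝ)..π, (H x - c) ^ 2) - ∫ x in (0:ℝ)..π, (H x - m) ^ 2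
        = π * (m - c) ^ 2 := by
      rw [← keyA, ← h]
    linarith
  -- Step B: Hardy on [0, π/2]
  have hB : ∫ x in (0:ℝ)..(π/2), u x ^ 2
      ≤ 4 * ∫ x in (0:ℝ)..(π/2), (x - 0) ^ 2 * deriv H x ^ 2 := by
    apply hardy_step u (deriv H) 0 (π/2) 0 (by linarith) hd hc'
    rw [hub]; ring
  -- Step C: Hardy on [π/2, π]
  have hC : ∫ x in (π/2)..π, u x ^ 2
      ≤ 4 * ∫ x in (π/2)..π, (x - π) ^ 2 * deriv H x ^ 2 := by
    apply hardy_step u (deriv H) (π/2) π π (by linarith) hd hc'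
    rw [hub]; ring
  -- Step D: pointwise sin comparison
  have hDL : ∀ x ∈ Set.Icc (0:ℝ) (π/2),
      (x - 0) ^ 2 * deriv H x ^ 2 ≤ π ^ 2 / 4 * (Real.sin x ^ 2 * deriv H x ^ 2) := by
    intro x hx
    have hs := Real.mul_le_sin hx.1 hx.2
    have h1 : (2 / π * x) ^ 2 ≤ Real.sin x ^ 2 :=
      pow_le_pow_left₀ (mul_nonneg (by positivity) hx.1) hs 2
    have h2 : x ^ 2 = π ^ 2 / 4 * (2 / π * x) ^ 2 := by
      field_simp; ring
    have h3 : x ^ 2 ≤ π ^ 2 / 4 * Real.sin x ^ 2 := by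
      have h4 := mul_le_mul_of_nonneg_left h1 (by positivity : (0:ℝ) ≤ π ^ 2 / 4)
      linarith
    have h5 := mul_le_mul_of_nonneg_right h3 (sq_nonneg (deriv H x))
    nlinarith [h5]
  have hDR : ∀ x ∈ Set.Icc (π/2) π,
      (x - π) ^ 2 * deriv H x ^ 2 ≤ π ^ 2 / 4 * (Real.sin x ^ 2 * deriv H x ^ 2) := by
    intro x hx
    have h0 : (0:ℝ) ≤ π - x := by linarith [hx.2]
    have h0' : π - x ≤ π / 2 := by linarith [hx.1]
    have hs := Real.mul_le_sin h0 h0'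
    rw [Real.sin_pi_sub] at hs
    have h1 : (2 / π * (π - x)) ^ 2 ≤ Real.sin x ^ 2 :=
      pow_le_pow_left₀ (mul_nonneg (by positivity) h0) hs 2
    have h2 : (x - π) ^ 2 = π ^ 2 / 4 * (2 / π * (π - x)) ^ 2 := by
      field_simp; ring
    have h3 : (x - π) ^ 2 ≤ π ^ 2 / 4 * Real.sin x ^ 2 := by
      have h4 := mul_le_mul_of_nonneg_left h1 (by positivity : (0:ℝ) ≤ π ^ 2 / 4)
      linarith
    have h5 := mul_le_mul_of_nonneg_right h3 (sq_nonneg (deriv H x))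
    nlinarith [h5]
  -- Step E: integrate comparisons
  have hEL : ∫ x in (0:ℝ)..(π/2), (x - 0) ^ 2 * deriv H x ^ 2
      ≤ π ^ 2 / 4 * ∫ x in (0:ℝ)..(π/2), Real.sin x ^ 2 * deriv H x ^ 2 := by
    rw [← intervalIntegral.integral_const_mul]
    apply intervalIntegral.integral_mono_on (by linarith)
    · exact (((continuous_id.sub continuous_const).pow 2).mul (hc'.pow 2)).intervalIntegrable _ _
    · exact ((hisin 0 (π/2)).const_mul _)
    · exact hDL
  have hER : ∫ x in (π/2)..π, (x - π) ^ 2 * deriv H x ^ 2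
      ≤ π ^ 2 / 4 * ∫ x in (π/2)..π, Real.sin x ^ 2 * deriv H x ^ 2 := by
    rw [← intervalIntegral.integral_const_mul]
    apply intervalIntegral.integral_mono_on (by linarith)
    · exact (((continuous_id.sub continuous_const).pow 2).mul (hc'.pow 2)).intervalIntegrable _ _
    · exact ((hisin (π/2) π).const_mul _)
    · exact hDR
  -- combine
  have hsplitu : (∫ x in (0:ℝ)..(π/2), u x ^ 2) + ∫ x in (π/2)..π, u x ^ 2
      = ∫ x in (0:ℝ)..π, u x ^ 2 :=
    intervalIntegral.integral_add_adjacent_intervals (hiuc 0 (π/2)) (hiuc (π/2) π)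
  have hsplits : (∫ x in (0:ℝ)..(π/2), Real.sin x ^ 2 * deriv H x ^ 2)
      + ∫ x in (π/2)..π, Real.sin x ^ 2 * deriv H x ^ 2
      = ∫ x in (0:ℝ)..π, Real.sin x ^ 2 * deriv H x ^ 2 :=
    intervalIntegral.integral_add_adjacent_intervals (hisin 0 (π/2)) (hisin (π/2) π)
  calc ∫ x in (0:ℝ)..π, (H x - m) ^ 2
      ≤ ∫ x in (0:ℝ)..π, u x ^ 2 := stepA
    _ = (∫ x in (0:ℝ)..(π/2), u x ^ 2) + ∫ x in (π/2)..π, u x ^ 2 := hsplitu.symm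
    _ ≤ π ^ 2 * ∫ x in (0:ℝ)..π, Real.sin x ^ 2 * deriv H x ^ 2 := by
        rw [← hsplits]; nlinarith [hB, hC, hEL, hER]
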